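/- Let G be a {K_5, K_4 − e}-free graph that is minimally non contact-B0-VPG (G is not contact B0-VPG but every proper induced subgraph of G is). Then every simplicial vertex of G has degree exactly three. -/

import Mathlib

/-- An axis-parallel nontrivial segment on the grid: `horiz` tells its direction,
`coord` is the fixed coordinate (the `y`-coordinate if horizontal, the `x`-coordinate
if vertical) and `[lo, hi]` (with `lo < hi`, i.e. the segment is nontrivial) is the
interval spanned by the varying coordinate. -/
structure GridSeg where
  horiz : Bool
  coord : ℤ
  lo : ℤ
  hi : ℤ
  lt : lo < hi

namespace GridSeg

/-- The set of points (in the real plane) of a grid segment. -/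
def pts (s : GridSeg) : Set (ℝ × ℝ) :=
  if s.horiz then {p | p.2 = (s.coord : ℝ) ∧ (s.lo : ℝ) ≤ p.1 ∧ p.1 ≤ (s.hi : ℝ)}
  else {p | p.1 = (s.coord : ℝ) ∧ (s.lo : ℝ) ≤ p.2 ∧ p.2 ≤ (s.hi : ℝ)}

/-- The interior of a grid segment. -/
def interior (s : GridSeg) : Set (ℝ × ℝ) :=
  if s.horiz then {p | p.2 = (s.coord : ℝ) ∧ (s.lo : ℝ) < p.1 ∧ p.1 < (s.hi : ℝ)}
  else {p | p.1 = (s.coord : ℝ) ∧ (s.lo : ℝ) < p.2 ∧ p.2 < (s.hi : ℝ)}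

/-- The two endpoints of a grid segment. -/
def ends (s : GridSeg) : Set (ℝ × ℝ) :=
  if s.horiz then {((s.lo : ℝ), (s.coord : ℝ)), ((s.hi : ℝ), (s.coord : ℝ))}
  else {((s.coord : ℝ), (s.lo : ℝ)), ((s.coord : ℝ), (s.hi : ℝ))}

/-- Two segments touch if they share a point which is an endpoint of at least
one of the two segments. -/
def Touch (s t : GridSeg) : Prop :=
  ∃ p : ℝ × ℝ, p ∈ s.pts ∧ p ∈ t.pts ∧ (p ∈ s.ends ∨ p ∈ t.ends)

end GridSeg

/-- `f` is a contact B₀-VPG representation of `G`: the segments of distinct vertices are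
interiorly disjoint, and two distinct vertices are adjacent iff their segments touch. -/
def IsB0Rep {V : Type*} (G : SimpleGraph V) (f : V → GridSeg) : Prop :=
  (∀ v w : V, v ≠ w → Disjoint (GridSeg.interior (f v)) (GridSeg.interior (f w))) ∧
  (∀ v w : V, v ≠ w → (G.Adj v w ↔ GridSeg.Touch (f v) (f w)))

/-- A graph is contact B₀-VPG if it admits a contact B₀-VPG representation. -/
def ContactB0VPG {V : Type*} (G : SimpleGraph V) : Prop :=
  ∃ f : V → GridSeg, IsB0Rep G f

/-- The diamond `K₄ − e`: the complete graph on four vertices minus the edge `{2, 3}`. -/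
def diamond : SimpleGraph (Fin 4) where
  Adj a b := a ≠ b ∧ ¬(a = 2 ∧ b = 3) ∧ ¬(a = 3 ∧ b = 2)
  symm := by
    constructor
    rintro a b ⟨h1, h2, h3⟩
    exact ⟨h1.symm, fun ⟨x, y⟩ => h3 ⟨y, x⟩, fun ⟨x, y⟩ => h2 ⟨y, x⟩⟩
  loopless := by
    constructor
    rintro a ⟨h, -, -⟩
    exact h rfl

open GridSeg

/-- scale a segment by 3 -/
def scl (s : GridSeg) : GridSeg := ⟨s.horiz, 3*s.coord, 3*s.lo, 3*s.hi, by have := s.lt; omega⟩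

/-- flip a segment across the diagonal -/
def flp (s : GridSeg) : GridSeg := ⟨!s.horiz, s.coord, s.lo, s.hi, s.lt⟩

lemma mem_pts_scl {s : GridSeg} {p : ℝ × ℝ} : p ∈ (scl s).pts ↔ (p.1/3, p.2/3) ∈ s.pts := by
  unfold GridSeg.pts scl
  cases hh : s.horiz <;> simp [hh] <;> push_cast <;>
    constructor <;> rintro ⟨h1, h2, h3⟩ <;> exact ⟨by linarith, by linarith, by linarith⟩

lemma mem_int_scl {s : GridSeg} {p : ℝ × ℝ} :
    p ∈ (scl s).interior ↔ (p.1/3, p.2/3) ∈ s.interior := by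
  unfold GridSeg.interior scl
  cases hh : s.horiz <;> simp [hh] <;> push_cast <;>
    constructor <;> rintro ⟨h1, h2, h3⟩ <;> exact ⟨by linarith, by linarith, by linarith⟩

lemma mem_ends_scl {s : GridSeg} {p : ℝ × ℝ} : p ∈ (scl s).ends ↔ (p.1/3, p.2/3) ∈ s.ends := by
  unfold GridSeg.ends scl
  cases hh : s.horiz <;> simp [hh, Prod.ext_iff] <;> push_cast <;>
    constructor <;> rintro (⟨h1, h2⟩ | ⟨h1, h2⟩)
  · exact Or.inl ⟨by linarith, by linarith⟩
  · exact Or.inr ⟨by linarith, by linarith⟩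
  · exact Or.inl ⟨by linarith, by linarith⟩
  · exact Or.inr ⟨by linarith, by linarith⟩
  · exact Or.inl ⟨by linarith, by linarith⟩
  · exact Or.inr ⟨by linarith, by linarith⟩
  · exact Or.inl ⟨by linarith, by linarith⟩
  · exact Or.inr ⟨by linarith, by linarith⟩

lemma mem_pts_flp {s : GridSeg} {p : ℝ × ℝ} : p ∈ (flp s).pts ↔ (p.2, p.1) ∈ s.pts := by
  unfold GridSeg.pts flp
  cases hh : s.horiz <;> simp [hh]

lemma mem_int_flp {s : GridSeg} {p : ℝ × ℝ} :
    p ∈ (flp s).interior ↔ (p.2, p.1) ∈ s.interior := by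
  unfold GridSeg.interior flp
  cases hh : s.horiz <;> simp [hh]

lemma mem_ends_flp {s : GridSeg} {p : ℝ × ℝ} : p ∈ (flp s).ends ↔ (p.2, p.1) ∈ s.ends := by
  unfold GridSeg.ends flp
  cases hh : s.horiz <;> simp [hh, Prod.ext_iff] <;> tauto

lemma touch_scl {s t : GridSeg} : (scl s).Touch (scl t) ↔ s.Touch t := by
  constructor
  · rintro ⟨p, h1, h2, h3⟩
    exact ⟨(p.1/3, p.2/3), mem_pts_scl.1 h1, mem_pts_scl.1 h2,
      h3.imp (fun h => mem_ends_scl.1 h) (fun h => mem_ends_scl.1 h)⟩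
  · rintro ⟨p, h1, h2, h3⟩
    refine ⟨(3*p.1, 3*p.2), ?_, ?_, ?_⟩
    · rw [mem_pts_scl]; simpa [mul_comm] using h1
    · rw [mem_pts_scl]; simpa [mul_comm] using h2
    · refine h3.imp (fun h => ?_) (fun h => ?_) <;> [rw [mem_ends_scl]; rw [mem_ends_scl]] <;>
        simpa [mul_comm] using h

lemma touch_flp {s t : GridSeg} : (flp s).Touch (flp t) ↔ s.Touch t := by
  constructor
  · rintro ⟨p, h1, h2, h3⟩
    exact ⟨(p.2, p.1), mem_pts_flp.1 h1, mem_pts_flp.1 h2,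
      h3.imp (fun h => mem_ends_flp.1 h) (fun h => mem_ends_flp.1 h)⟩
  · rintro ⟨p, h1, h2, h3⟩
    refine ⟨(p.2, p.1), mem_pts_flp.2 h1, mem_pts_flp.2 h2,
      h3.imp (fun h => mem_ends_flp.2 h) (fun h => mem_ends_flp.2 h)⟩

lemma disj_scl {s t : GridSeg} (h : Disjoint s.interior t.interior) :
    Disjoint (scl s).interior (scl t).interior := by
  rw [Set.disjoint_left] at h ⊢
  intro p h1 h2
  exact h (mem_int_scl.1 h1) (mem_int_scl.1 h2)

lemma disj_flp {s t : GridSeg} (h : Disjoint s.interior t.interior) :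
    Disjoint (flp s).interior (flp t).interior := by
  rw [Set.disjoint_left] at h ⊢
  intro p h1 h2
  exact h (mem_int_flp.1 h1) (mem_int_flp.1 h2)

lemma isB0Rep_scl {W : Type*} {H : SimpleGraph W} {f : W → GridSeg} (hf : IsB0Rep H f) :
    IsB0Rep H (fun w => scl (f w)) :=
  ⟨fun a b hab => disj_scl (hf.1 a b hab),
   fun a b hab => (hf.2 a b hab).trans touch_scl.symm⟩

lemma isB0Rep_flp {W : Type*} {H : SimpleGraph W} {f : W → GridSeg} (hf : IsB0Rep H f) :
    IsB0Rep H (fun w => flp (f w)) :=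
  ⟨fun a b hab => disj_flp (hf.1 a b hab),
   fun a b hab => (hf.2 a b hab).trans touch_flp.symm⟩

lemma pts_eq_int_union_ends (s : GridSeg) : s.pts = s.interior ∪ s.ends := by
  have hlt : (s.lo:ℝ) < s.hi := by exact_mod_cast s.lt
  unfold GridSeg.pts GridSeg.interior GridSeg.ends
  cases hh : s.horiz <;> simp only [Bool.false_eq_true, if_true, if_false] <;> ext p <;>
      simp only [Set.mem_setOf_eq, Set.mem_union, Set.mem_insert_iff, Set.mem_singleton_iff,
        Prod.ext_iff] <;> constructor
  · rintro ⟨h1, h2, h3⟩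
    rcases eq_or_lt_of_le h2 with h | h
    · exact Or.inr (Or.inl ⟨h1, h.symm⟩)
    rcases eq_or_lt_of_le h3 with h' | h'
    · exact Or.inr (Or.inr ⟨h1, h'⟩)
    · exact Or.inl ⟨h1, h, h'⟩
  · rintro (⟨h1, h2, h3⟩ | ⟨h1, h2⟩ | ⟨h1, h2⟩)
    · exact ⟨h1, h2.le, h3.le⟩
    · exact ⟨h1, h2.ge, by rw [h2]; exact hlt.le⟩
    · exact ⟨h1, by rw [h2]; exact hlt.le, h2.le⟩
  · rintro ⟨h1, h2, h3⟩
    rcases eq_or_lt_of_le h2 with h | h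
    · exact Or.inr (Or.inl ⟨h.symm, h1⟩)
    rcases eq_or_lt_of_le h3 with h' | h'
    · exact Or.inr (Or.inr ⟨h', h1⟩)
    · exact Or.inl ⟨h1, h, h'⟩
  · rintro (⟨h1, h2, h3⟩ | ⟨h1, h2⟩ | ⟨h1, h2⟩)
    · exact ⟨h1, h2.le, h3.le⟩
    · exact ⟨h2, h1.ge, by rw [h1]; exact hlt.le⟩
    · exact ⟨h2, by rw [h1]; exact hlt.le, h1.le⟩

lemma mem_int_of_not_ends {s : GridSeg} {p : ℝ × ℝ} (h : p ∈ s.pts) (h2 : p ∉ s.ends) :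
    p ∈ s.interior := by
  rw [pts_eq_int_union_ends] at h
  exact h.resolve_right h2

/-- if two interior-disjoint segments share a point, they touch -/
lemma touch_of_shared {s t : GridSeg} (hd : Disjoint s.interior t.interior) {p : ℝ × ℝ}
    (hs : p ∈ s.pts) (ht : p ∈ t.pts) : s.Touch t := by
  by_cases he : p ∈ s.ends
  · exact ⟨p, hs, ht, Or.inl he⟩
  by_cases he' : p ∈ t.ends
  · exact ⟨p, hs, ht, Or.inr he'⟩
  exact absurd (Set.disjoint_left.1 hd (mem_int_of_not_ends hs he))
    (by simp [mem_int_of_not_ends ht he'])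
lemma touch_symm {s t : GridSeg} (h : s.Touch t) : t.Touch s := by
  obtain ⟨p, h1, h2, h3⟩ := h
  exact ⟨p, h2, h1, h3.symm⟩

lemma int_subset_pts (s : GridSeg) : s.interior ⊆ s.pts := by
  rw [pts_eq_int_union_ends]; exact Set.subset_union_left

lemma ext_rep {V : Type*} (G : SimpleGraph V) (v : V)
    (f : ↥{w : V | w ≠ v} → GridSeg) (hf : IsB0Rep (G.induce {w : V | w ≠ v}) f)
    (vs : GridSeg)
    (hd : ∀ w : ↥{w : V | w ≠ v}, Disjoint vs.interior (f w).interior)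
    (ht : ∀ w : ↥{w : V | w ≠ v}, G.Adj v w ↔ vs.Touch (f w)) :
    ContactB0VPG G := by
  classical
  refine ⟨fun w => if h : w = v then vs else f ⟨w, h⟩, ?_, ?_⟩
  · intro x y hxy
    by_cases hx : x = v <;> by_cases hy : y = v
    · exact absurd (hx.trans hy.symm) hxy
    · subst hx; simpa [hy] using hd ⟨y, hy⟩
    · subst hy; simpa [hx] using (hd ⟨x, hx⟩).symm
    · simpa [hx, hy] using hf.1 ⟨x, hx⟩ ⟨y, hy⟩ (by simp [Subtype.ext_iff, hxy])
  · intro x y hxy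
    by_cases hx : x = v <;> by_cases hy : y = v
    · exact absurd (hx.trans hy.symm) hxy
    · subst hx; simpa [hy] using ht ⟨y, hy⟩
    · subst hy
      simp only [hx, dif_neg, dif_pos]
      constructor
      · intro h; exact touch_symm ((ht ⟨x, hx⟩).1 h.symm)
      · intro h; exact ((ht ⟨x, hx⟩).2 (touch_symm h)).symm
    · have := hf.2 ⟨x, hx⟩ ⟨y, hy⟩ (by simp [Subtype.ext_iff, hxy])
      simpa [hx, hy, SimpleGraph.comap_adj] using this

lemma no_touch_of_pts_disj {s t : GridSeg} (h : ∀ p : ℝ × ℝ, p ∈ s.pts → p ∈ t.pts → False) :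
    Disjoint s.interior t.interior ∧ ¬ s.Touch t := by
  constructor
  · rw [Set.disjoint_left]
    intro p h1 h2
    exact h p (int_subset_pts s h1) (int_subset_pts t h2)
  · rintro ⟨p, h1, h2, -⟩
    exact h p h1 h2
lemma ends_int {s : GridSeg} {p : ℝ × ℝ} (h : p ∈ s.ends) :
    ∃ i j : ℤ, p = ((i:ℝ), (j:ℝ)) := by
  unfold GridSeg.ends at h
  cases hh : s.horiz <;> simp [hh] at h <;> rcases h with h | h
  · exact ⟨s.coord, s.lo, h⟩
  · exact ⟨s.coord, s.hi, h⟩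
  · exact ⟨s.lo, s.coord, h⟩
  · exact ⟨s.hi, s.coord, h⟩

lemma ray_vert {u : GridSeg} {ix iy e : ℤ} (he : e = 3*iy ∨ e = 3*iy-1) {p : ℝ × ℝ}
    (h1 : p.1 = 3*(ix:ℝ)) (h2 : (e:ℝ) ≤ p.2) (h3 : p.2 ≤ (e:ℝ)+1)
    (hu : p ∈ (scl u).pts) {q : ℝ × ℝ} (hq1 : q.1 = 3*(ix:ℝ)) (hq2 : q.2 = 3*(iy:ℝ)) :
    q ∈ (scl u).pts := by
  unfold GridSeg.pts scl at hu ⊢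
  cases hh : u.horiz <;>
    simp only [hh, Bool.false_eq_true, if_false, if_true, Set.mem_setOf_eq] at hu ⊢ <;>
    push_cast at hu ⊢ <;> obtain ⟨hu1, hu2, hu3⟩ := hu
  · -- vertical
    have hcu : u.coord = ix := by
      have h' : (3:ℝ)*u.coord = 3*ix := by rw [← hu1, h1]
      have h'' : 3*u.coord = 3*ix := by exact_mod_cast h'
      omega
    have hlo : u.lo ≤ iy := by
      have hr : (3:ℝ)*u.lo ≤ e+1 := le_trans hu2 h3
      have h' : 3*u.lo ≤ e+1 := by exact_mod_cast hr
      omega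
    have hhi : iy ≤ u.hi := by
      have hr : (e:ℝ) ≤ 3*u.hi := le_trans h2 hu3
      have h' : e ≤ 3*u.hi := by exact_mod_cast hr
      omega
    refine ⟨?_, ?_, ?_⟩
    · rw [hq1, hcu]
    · rw [hq2]
      have hc : ((3*u.lo:ℤ):ℝ) ≤ ((3*iy:ℤ):ℝ) := Int.cast_le.mpr (by omega)
      push_cast at hc ⊢; linarith
    · rw [hq2]
      have hc : ((3*iy:ℤ):ℝ) ≤ ((3*u.hi:ℤ):ℝ) := Int.cast_le.mpr (by omega)
      push_cast at hc ⊢; linarith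
  · -- horizontal
    have hcu : u.coord = iy := by
      have l1 : (e:ℝ) ≤ 3*u.coord := by rw [← hu1]; exact h2
      have l2 : (3:ℝ)*u.coord ≤ e+1 := by rw [← hu1]; exact h3
      have l1' : e ≤ 3*u.coord := by exact_mod_cast l1
      have l2' : 3*u.coord ≤ e+1 := by exact_mod_cast l2
      omega
    refine ⟨?_, ?_, ?_⟩
    · rw [hq2, hcu]
    · rw [hq1, ← h1]; exact hu2
    · rw [hq1, ← h1]; exact hu3

lemma ray_horiz {u : GridSeg} {ix iy e : ℤ} (he : e = 3*ix ∨ e = 3*ix-1) {p : ℝ × ℝ}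
    (h1 : p.2 = 3*(iy:ℝ)) (h2 : (e:ℝ) ≤ p.1) (h3 : p.1 ≤ (e:ℝ)+1)
    (hu : p ∈ (scl u).pts) {q : ℝ × ℝ} (hq1 : q.1 = 3*(ix:ℝ)) (hq2 : q.2 = 3*(iy:ℝ)) :
    q ∈ (scl u).pts := by
  have hm : (q.2, q.1) ∈ (scl (flp u)).pts := by
    refine ray_vert (u := flp u) (ix := iy) (iy := ix) he (p := (p.2, p.1)) h1 h2 h3 ?_
      (q := (q.2, q.1)) hq2 hq1
    rw [show scl (flp u) = flp (scl u) from rfl, mem_pts_flp]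
    exact hu
  rw [show scl (flp u) = flp (scl u) from rfl, mem_pts_flp] at hm
  exact hm

lemma diamond_of {V : Type*} (G : SimpleGraph V) (x y z w : V)
    (hxy : G.Adj x y) (hxz : G.Adj x z) (hxw : G.Adj x w)
    (hyz : G.Adj y z) (hyw : G.Adj y w) (hzw : ¬ G.Adj z w) (hzw' : z ≠ w) :
    Nonempty (diamond ↪g G) := by
  refine ⟨⟨⟨![x, y, z, w], ?_⟩, ?_⟩⟩
  · intro i j hij
    fin_cases i <;> fin_cases j <;> simp_all <;>
      first
      | rfl
      | exact absurd hij hxy.ne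
      | exact absurd hij hxz.ne
      | exact absurd hij hxw.ne
      | exact absurd hij hyz.ne
      | exact absurd hij hyw.ne
      | exact absurd hij hzw'
      | exact absurd hij.symm hxy.ne
      | exact absurd hij.symm hxz.ne
      | exact absurd hij.symm hxw.ne
      | exact absurd hij.symm hyz.ne
      | exact absurd hij.symm hyw.ne
      | exact absurd hij.symm hzw'
  · intro i j
    have hwz : ¬ G.Adj w z := fun h => hzw h.symm
    show G.Adj (![x, y, z, w] i) (![x, y, z, w] j) ↔ diamond.Adj i j
    fin_cases i <;> fin_cases j <;>
      simp [diamond, hxy, hxz, hxw, hyz, hyw, hzw, hwz, hxy.symm, hxz.symm, hxw.symm,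
        hyz.symm, hyw.symm, hxy.ne, hxz.ne, hxw.ne, hyz.ne,
        hyw.ne, hzw', hxy.ne', hxz.ne', hxw.ne', hyz.ne', hyw.ne', hzw'.symm,
        G.irrefl, Fin.ext_iff] <;> decide
/-- in a `{K₅, K₄ − e}`-free graph which is minimally non contact B₀-VPG
(it is not contact B₀-VPG but every proper induced subgraph is), every simplicial vertex
has degree exactly three. -/
theorem minimal_simplicial_degree_three {V : Type*} [Finite V] (G : SimpleGraph V)
    (hK5 : IsEmpty ((⊤ : SimpleGraph (Fin 5)) ↪g G))
    (hdiamond : IsEmpty (diamond ↪g G))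
    (hnot : ¬ ContactB0VPG G)
    (hmin : ∀ s : Set V, s ≠ Set.univ → ContactB0VPG (G.induce s))
    (v : V) (hsimp : ∀ a ∈ G.neighborSet v, ∀ b ∈ G.neighborSet v, a ≠ b → G.Adj a b) :
    (G.neighborSet v).ncard = 3 := by
  classical
  have hCF : G.CliqueFree 5 := SimpleGraph.cliqueFree_iff.mpr ⟨fun c => hK5.false c.topEmbedding⟩
  have hNfin : (G.neighborSet v).Finite := Set.toFinite _
  -- upper bound on the degree
  have hle : (G.neighborSet v).ncard ≤ 3 := by
    by_contra hgt
    push_neg at hgt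
    obtain ⟨t, hts, htc⟩ := Set.exists_subset_card_eq (show 4 ≤ (G.neighborSet v).ncard by omega)
    have htfin : t.Finite := hNfin.subset hts
    have hvt : v ∉ t := fun hv => G.irrefl (hts hv)
    refine hCF (insert v htfin.toFinset) ⟨?_, ?_⟩
    · intro x hx y hy hxy
      simp only [Finset.coe_insert, Set.Finite.coe_toFinset, Set.mem_insert_iff] at hx hy
      rcases hx with rfl | hx <;> rcases hy with rfl | hy
      · exact absurd rfl hxy
      · exact hts hy
      · exact (hts hx).symm
      · exact hsimp x (hts hx) y (hts hy) hxy
    · rw [Finset.card_insert_of_notMem (by simpa using hvt)]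
      rw [show htfin.toFinset.card = 4 from by rw [← Set.ncard_eq_toFinset_card t htfin]; exact htc]
  by_contra hne3
  have h012 : (G.neighborSet v).ncard = 0 ∨ (G.neighborSet v).ncard = 1 ∨
      (G.neighborSet v).ncard = 2 := by omega
  -- representation of G minus v
  set s : Set V := {w | w ≠ v} with hs_def
  have hvs : v ∉ s := by simp [hs_def]
  have hsne : s ≠ Set.univ := fun h => hvs (h ▸ Set.mem_univ v)
  obtain ⟨f0, hf0⟩ := hmin s hsne
  rcases h012 with h0 | h1 | h2
  · -- degree zero
    have hN : G.neighborSet v = ∅ := by rwa [Set.ncard_eq_zero hNfin] at h0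
    have hadj : ∀ w : V, ¬ G.Adj v w := by
      intro w hw
      exact absurd (show w ∈ G.neighborSet v from hw) (by simp [hN])
    have : Fintype ↥s := Fintype.ofFinite ↥s
    set M : ℤ := 1 + (Finset.univ.sup fun w : ↥s => ((f0 w).coord ⊔ (f0 w).hi).toNat) with hM
    have hMgt : ∀ w : ↥s, (f0 w).coord < M ∧ (f0 w).hi < M := by
      intro w
      have h1 : ((f0 w).coord ⊔ (f0 w).hi).toNat ≤
          (Finset.univ.sup fun w : ↥s => ((f0 w).coord ⊔ (f0 w).hi).toNat) :=
        Finset.le_sup (f := fun w : ↥s => ((f0 w).coord ⊔ (f0 w).hi).toNat) (Finset.mem_univ w)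
      have h2 : (f0 w).coord ⊔ (f0 w).hi ≤ ((f0 w).coord ⊔ (f0 w).hi).toNat :=
        Int.self_le_toNat _
      have h3 := le_sup_left (a := (f0 w).coord) (b := (f0 w).hi)
      have h4 := le_sup_right (a := (f0 w).coord) (b := (f0 w).hi)
      omega
    set vs : GridSeg := ⟨true, M, 0, 1, by omega⟩ with hvseg
    have key : ∀ w : ↥s, ∀ p : ℝ × ℝ, p ∈ vs.pts → p ∈ (f0 w).pts → False := by
      intro w p hp hpw
      obtain ⟨hc, hh⟩ := hMgt w
      simp only [GridSeg.pts, hvseg, if_pos] at hp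
      have hp2 : p.2 = (M : ℝ) := hp.1
      by_cases hor : (f0 w).horiz = true
      · simp only [GridSeg.pts, hor, if_pos, Set.mem_setOf_eq] at hpw
        have : ((f0 w).coord : ℝ) = (M : ℝ) := by rw [← hpw.1, hp2]
        have : (f0 w).coord = M := by exact_mod_cast this
        omega
      · simp only [GridSeg.pts, hor, if_neg, Bool.not_eq_true, Set.mem_setOf_eq] at hpw
        have h5 : (M:ℝ) ≤ ((f0 w).hi : ℝ) := by
          rw [← hp2]; exact hpw.2.2
        have : M ≤ (f0 w).hi := by exact_mod_cast h5
        omega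
    refine hnot (ext_rep G v f0 hf0 vs (fun w => ?_) (fun w => ?_))
    · exact (no_touch_of_pts_disj (key w)).1
    · simp only [hadj ↑w, false_iff]
      exact (no_touch_of_pts_disj (key w)).2
  · -- degree one
    obtain ⟨a, hNa⟩ := Set.ncard_eq_one.1 h1
    have hva : G.Adj v a := by
      have : a ∈ G.neighborSet v := by rw [hNa]; rfl
      exact this
    have hav : a ≠ v := fun h => G.irrefl (h ▸ hva)
    set av : ↥s := ⟨a, hav⟩ with hav_def
    have hadj_iff : ∀ w : V, G.Adj v w ↔ w = a := by
      intro w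
      rw [← SimpleGraph.mem_neighborSet, hNa, Set.mem_singleton_iff]
    obtain ⟨f1, hf1, hhor⟩ : ∃ f1 : ↥s → GridSeg, IsB0Rep (G.induce s) f1 ∧
        (f1 av).horiz = true := by
      by_cases hor : (f0 av).horiz = true
      · exact ⟨f0, hf0, hor⟩
      · refine ⟨fun w => flp (f0 w), isB0Rep_flp hf0, ?_⟩
        simp only [flp]
        simp only [Bool.not_eq_true] at hor
        simp [hor]
    have hF := isB0Rep_scl hf1
    set c := (f1 av).coord with hc_def
    set lo := (f1 av).lo with hlo_def
    set hi := (f1 av).hi with hhi_def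
    have hlt : lo < hi := (f1 av).lt
    set vs : GridSeg := ⟨false, 3*lo+1, 3*c, 3*c+1, by omega⟩ with hvseg
    have hvpts : ∀ p : ℝ × ℝ, p ∈ vs.pts ↔
        (p.1 = 3*(lo:ℝ)+1 ∧ 3*(c:ℝ) ≤ p.2 ∧ p.2 ≤ 3*(c:ℝ)+1) := by
      intro p
      simp only [GridSeg.pts, hvseg, Bool.false_eq_true, if_neg, Set.mem_setOf_eq]
      push_cast
      exact Iff.rfl
    have key1 : ∀ w : ↥s, w ≠ av → ∀ p : ℝ × ℝ, p ∈ vs.pts → p ∈ (scl (f1 w)).pts → False := by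
      intro w hw p hp hpw
      rw [hvpts] at hp
      by_cases hor : (f1 w).horiz = true
      · simp only [GridSeg.pts, scl, hor, if_pos, Set.mem_setOf_eq] at hpw
        push_cast at hpw
        obtain ⟨hw1, hw2, hw3⟩ := hpw
        have hcw : (f1 w).coord = c := by
          have l1 : (3:ℝ)*c ≤ 3*(f1 w).coord := by rw [← hw1]; exact hp.2.1
          have l2 : (3:ℝ)*(f1 w).coord ≤ 3*c+1 := by rw [← hw1]; exact hp.2.2
          have l1' : 3*c ≤ 3*(f1 w).coord := by exact_mod_cast l1
          have l2' : 3*(f1 w).coord ≤ 3*c+1 := by exact_mod_cast l2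
          omega
        have hlo' : (f1 w).lo ≤ lo := by
          have l1 : (3:ℝ)*(f1 w).lo ≤ 3*lo+1 := by rw [← hp.1]; exact hw2
          have l1' : 3*(f1 w).lo ≤ 3*lo+1 := by exact_mod_cast l1
          omega
        have hhi' : lo + 1 ≤ (f1 w).hi := by
          have l1 : 3*(lo:ℝ)+1 ≤ 3*(f1 w).hi := by rw [← hp.1]; exact hw3
          have l1' : 3*lo+1 ≤ 3*(f1 w).hi := by exact_mod_cast l1
          omega
        have hq1 : ((3*(lo:ℝ)+1, 3*(c:ℝ)) : ℝ × ℝ) ∈ (scl (f1 w)).interior := by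
          simp only [GridSeg.interior, scl, hor, if_pos, Set.mem_setOf_eq]
          push_cast
          refine ⟨by rw [hcw], ?_, ?_⟩
          · have : (3:ℝ)*(f1 w).lo ≤ 3*lo := by exact_mod_cast (by omega : 3*(f1 w).lo ≤ 3*lo)
            linarith
          · have : (3:ℝ)*lo+3 ≤ 3*(f1 w).hi := by exact_mod_cast (by omega : 3*lo+3 ≤ 3*(f1 w).hi)
            linarith
        have hq2 : ((3*(lo:ℝ)+1, 3*(c:ℝ)) : ℝ × ℝ) ∈ (scl (f1 av)).interior := by
          simp only [GridSeg.interior, scl, hhor, if_pos, Set.mem_setOf_eq]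
          push_cast
          refine ⟨rfl, by linarith, ?_⟩
          have : (3:ℝ)*lo+3 ≤ 3*hi := by exact_mod_cast (by omega : 3*lo+3 ≤ 3*hi)
          linarith
        exact Set.disjoint_left.1 (hF.1 w av hw) hq1 hq2
      · simp only [GridSeg.pts, scl, hor, if_neg, Set.mem_setOf_eq] at hpw
        push_cast at hpw
        have l1 : (3:ℝ)*(f1 w).coord = 3*lo+1 := by rw [← hp.1]; exact hpw.1.symm
        have l1' : 3*(f1 w).coord = 3*lo+1 := by exact_mod_cast l1
        omega
    have htouch : vs.Touch (scl (f1 av)) := by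
      refine ⟨(3*(lo:ℝ)+1, 3*(c:ℝ)), ?_, ?_, Or.inl ?_⟩
      · rw [hvpts]
        exact ⟨rfl, le_refl _, by show (3*(c:ℝ)) ≤ 3*(c:ℝ)+1; linarith⟩
      · simp only [GridSeg.pts, scl, hhor, if_pos, Set.mem_setOf_eq]
        push_cast
        refine ⟨rfl, by linarith, ?_⟩
        have : (3:ℝ)*lo+3 ≤ 3*hi := by exact_mod_cast (by omega : 3*lo+3 ≤ 3*hi)
        linarith
      · simp only [GridSeg.ends, hvseg, Bool.false_eq_true, if_neg, Set.mem_insert_iff,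
          Set.mem_singleton_iff, Prod.ext_iff]
        push_cast
        exact Set.mem_insert _ _
    refine hnot (ext_rep G v (fun w => scl (f1 w)) hF vs (fun w => ?_) (fun w => ?_))
    · by_cases hw : w = av
      · subst hw
        rw [Set.disjoint_left]
        intro p hp1 hp2
        simp only [GridSeg.interior, hvseg, Bool.false_eq_true, if_neg, Set.mem_setOf_eq] at hp1
        simp only [GridSeg.interior, scl, hhor, if_pos, Set.mem_setOf_eq] at hp2
        push_cast at hp1 hp2
        linarith [hp1.2.1, hp2.1.le]
      · exact (no_touch_of_pts_disj (key1 w hw)).1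
    · rw [hadj_iff]
      by_cases hw : w = av
      · subst hw
        exact ⟨fun _ => htouch, fun _ => rfl⟩
      · have : (↑w : V) ≠ a := by
          intro h
          exact hw (Subtype.ext h)
        simp only [this, false_iff]
        exact (no_touch_of_pts_disj (key1 w hw)).2
  · -- degree two
    obtain ⟨a, b, hab, hNab⟩ := Set.ncard_eq_two.1 h2
    have hmema : a ∈ G.neighborSet v := by rw [hNab]; exact Set.mem_insert _ _
    have hmemb : b ∈ G.neighborSet v := by rw [hNab]; exact Set.mem_insert_iff.2 (Or.inr rfl)
    have hva : G.Adj v a := hmema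
    have hvb : G.Adj v b := hmemb
    have hGab : G.Adj a b := hsimp a hmema b hmemb hab
    have hadj_iff : ∀ w : V, G.Adj v w ↔ (w = a ∨ w = b) := by
      intro w
      rw [← SimpleGraph.mem_neighborSet, hNab]
      simp
    have aux : ∀ (f1 : ↥s → GridSeg), IsB0Rep (G.induce s) f1 →
        ∀ (x y : V) (hx : x ≠ v) (hy : y ≠ v), x ≠ y → G.Adj x y → G.Adj v x → G.Adj v y →
        (∀ w : V, G.Adj v w ↔ (w = x ∨ w = y)) → (f1 ⟨x, hx⟩).horiz = true → False := by
      intro f1 hf1 x y hx hy hxy hGxy hvx hvy hiff hhx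
      set xv : ↥s := ⟨x, hx⟩ with hxv_def
      set yv : ↥s := ⟨y, hy⟩ with hyv_def
      have hxyv : xv ≠ yv := fun h => hxy (congrArg Subtype.val h)
      have hF := isB0Rep_scl hf1
      have htch : (f1 xv).Touch (f1 yv) := by
        refine (hf1.2 xv yv hxyv).1 ?_
        simpa [SimpleGraph.comap_adj] using hGxy
      obtain ⟨q0, hq0x, hq0y, hq0e⟩ := htch
      obtain ⟨ix, iy, rfl⟩ : ∃ i j : ℤ, q0 = ((i:ℝ), (j:ℝ)) := by
        rcases hq0e with h | h
        · exact ends_int h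
        · exact ends_int h
      set q : ℝ × ℝ := (3*(ix:ℝ), 3*(iy:ℝ)) with hq_def
      have hq1 : q.1 = 3*(ix:ℝ) := by rw [hq_def]
      have hq2 : q.2 = 3*(iy:ℝ) := by rw [hq_def]
      have hdiv : ((q.1/3, q.2/3) : ℝ × ℝ) = (((ix:ℤ):ℝ), ((iy:ℤ):ℝ)) := by
        rw [Prod.ext_iff]
        refine ⟨?_, ?_⟩ <;> rw [hq_def] <;> push_cast <;> ring
      have hqx : q ∈ (scl (f1 xv)).pts := by
        rw [mem_pts_scl, hdiv]; exact hq0x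
      have hqy : q ∈ (scl (f1 yv)).pts := by
        rw [mem_pts_scl, hdiv]; exact hq0y
      have honly : ∀ w : ↥s, q ∈ (scl (f1 w)).pts → w = xv ∨ w = yv := by
        intro w hqw
        by_contra hcon
        push_neg at hcon
        obtain ⟨hwx, hwy⟩ := hcon
        have hadjwx : G.Adj (↑w) x := by
          have ht := touch_of_shared (hF.1 w xv hwx) hqw hqx
          have := (hF.2 w xv hwx).2 ht
          simpa [SimpleGraph.comap_adj] using this
        have hadjwy : G.Adj (↑w) y := by
          have ht := touch_of_shared (hF.1 w yv hwy) hqw hqy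
          have := (hF.2 w yv hwy).2 ht
          simpa [SimpleGraph.comap_adj] using this
        have hnvw : ¬ G.Adj v ↑w := by
          rw [hiff]
          push_neg
          exact ⟨fun h => hwx (Subtype.ext h), fun h => hwy (Subtype.ext h)⟩
        have hvw' : v ≠ ↑w := fun h => (w.2 : (↑w:V) ≠ v) h.symm
        exact (diamond_of G x y v ↑w hGxy hvx.symm hadjwx.symm hvy.symm hadjwy.symm
          hnvw hvw').elim fun e => hdiamond.false e
      have hfin : ∀ vs2 : GridSeg, q ∈ vs2.pts → q ∈ vs2.ends →
          (∀ p : ℝ × ℝ, p ∈ vs2.pts → ∀ u : GridSeg, p ∈ (scl u).pts → q ∈ (scl u).pts) →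
          Disjoint vs2.interior (scl (f1 xv)).interior →
          Disjoint vs2.interior (scl (f1 yv)).interior → False := by
        intro vs2 hqp hqe hray hdx hdy
        have key2 : ∀ w : ↥s, w ≠ xv → w ≠ yv →
            ∀ p : ℝ × ℝ, p ∈ vs2.pts → p ∈ (scl (f1 w)).pts → False := by
          intro w hwx hwy p hp hpw
          rcases honly w (hray p hp _ hpw) with h | h
          exacts [hwx h, hwy h]
        refine hnot (ext_rep G v (fun w => scl (f1 w)) hF vs2 (fun w => ?_) (fun w => ?_))
        · by_cases hwx : w = xv
          · rw [hwx]; exact hdx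
          by_cases hwy : w = yv
          · rw [hwy]; exact hdy
          · exact (no_touch_of_pts_disj (key2 w hwx hwy)).1
        · rw [hiff]
          by_cases hwx : w = xv
          · rw [hwx]
            constructor
            · intro _; exact ⟨q, hqp, hqx, Or.inl hqe⟩
            · intro _; exact Or.inl rfl
          by_cases hwy : w = yv
          · rw [hwy]
            constructor
            · intro _; exact ⟨q, hqp, hqy, Or.inl hqe⟩
            · intro _; exact Or.inr rfl
          · have h1 : ¬((↑w : V) = x ∨ (↑w : V) = y) := by
              push_neg
              exact ⟨fun h => hwx (Subtype.ext h), fun h => hwy (Subtype.ext h)⟩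
            simp only [h1, false_iff]
            exact (no_touch_of_pts_disj (key2 w hwx hwy)).2
      -- facts about the x-segment (horizontal)
      have hqx' : 3*(iy:ℝ) = ((3*(f1 xv).coord : ℤ):ℝ) ∧
          ((3*(f1 xv).lo : ℤ):ℝ) ≤ 3*(ix:ℝ) ∧ 3*(ix:ℝ) ≤ ((3*(f1 xv).hi : ℤ):ℝ) := by
        have h := hqx
        unfold GridSeg.pts scl at h
        simp only [hhx, if_true, Set.mem_setOf_eq] at h
        exact h
      have hca : (f1 xv).coord = iy := by
        have := hqx'.1
        have h' : 3*iy = 3*(f1 xv).coord := by exact_mod_cast this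
        omega
      have hcaR : ((f1 xv).coord : ℝ) = (iy:ℝ) := by exact_mod_cast hca
      have halo : (f1 xv).lo ≤ ix := by
        have := hqx'.2.1
        have h' : 3*(f1 xv).lo ≤ 3*ix := by exact_mod_cast this
        omega
      have hahi : ix ≤ (f1 xv).hi := by
        have := hqx'.2.2
        have h' : 3*ix ≤ 3*(f1 xv).hi := by exact_mod_cast this
        omega
      -- the four candidate rays : membership, endpoint, ray property
      have upP : q ∈ (⟨false, 3*ix, 3*iy, 3*iy+1, by omega⟩ : GridSeg).pts := by
        unfold GridSeg.pts
        simp only [Bool.false_eq_true, if_false, Set.mem_setOf_eq, hq1, hq2]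
        push_cast
        exact ⟨rfl, le_refl _, by linarith⟩
      have upE : q ∈ (⟨false, 3*ix, 3*iy, 3*iy+1, by omega⟩ : GridSeg).ends := by
        unfold GridSeg.ends
        simp only [Bool.false_eq_true, if_false, Set.mem_insert_iff, Set.mem_singleton_iff]
        left
        rw [hq_def, Prod.ext_iff]
        constructor <;> push_cast <;> ring
      have upR : ∀ p : ℝ × ℝ, p ∈ (⟨false, 3*ix, 3*iy, 3*iy+1, by omega⟩ : GridSeg).pts →
          ∀ u : GridSeg, p ∈ (scl u).pts → q ∈ (scl u).pts := by
        intro p hp u hpu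
        unfold GridSeg.pts at hp
        simp only [Bool.false_eq_true, if_false, Set.mem_setOf_eq] at hp
        push_cast at hp
        exact ray_vert (Or.inl rfl) hp.1 (by push_cast; linarith [hp.2.1]) (by push_cast; linarith [hp.2.2]) hpu hq1 hq2
      have downP : q ∈ (⟨false, 3*ix, 3*iy-1, 3*iy, by omega⟩ : GridSeg).pts := by
        unfold GridSeg.pts
        simp only [Bool.false_eq_true, if_false, Set.mem_setOf_eq, hq1, hq2]
        push_cast
        exact ⟨rfl, by linarith, le_refl _⟩
      have downE : q ∈ (⟨false, 3*ix, 3*iy-1, 3*iy, by omega⟩ : GridSeg).ends := by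
        unfold GridSeg.ends
        simp only [Bool.false_eq_true, if_false, Set.mem_insert_iff, Set.mem_singleton_iff]
        right
        rw [hq_def, Prod.ext_iff]
        constructor <;> push_cast <;> ring
      have downR : ∀ p : ℝ × ℝ, p ∈ (⟨false, 3*ix, 3*iy-1, 3*iy, by omega⟩ : GridSeg).pts →
          ∀ u : GridSeg, p ∈ (scl u).pts → q ∈ (scl u).pts := by
        intro p hp u hpu
        unfold GridSeg.pts at hp
        simp only [Bool.false_eq_true, if_false, Set.mem_setOf_eq] at hp
        push_cast at hp
        exact ray_vert (Or.inr rfl) hp.1 (by push_cast; linarith [hp.2.1])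
          (by push_cast; linarith [hp.2.2]) hpu hq1 hq2
      have rightP : q ∈ (⟨true, 3*iy, 3*ix, 3*ix+1, by omega⟩ : GridSeg).pts := by
        unfold GridSeg.pts
        simp only [if_true, Set.mem_setOf_eq, hq1, hq2]
        push_cast
        exact ⟨rfl, le_refl _, by linarith⟩
      have rightE : q ∈ (⟨true, 3*iy, 3*ix, 3*ix+1, by omega⟩ : GridSeg).ends := by
        unfold GridSeg.ends
        simp only [if_true, Set.mem_insert_iff, Set.mem_singleton_iff]
        left
        rw [hq_def, Prod.ext_iff]
        constructor <;> push_cast <;> ring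
      have rightR : ∀ p : ℝ × ℝ, p ∈ (⟨true, 3*iy, 3*ix, 3*ix+1, by omega⟩ : GridSeg).pts →
          ∀ u : GridSeg, p ∈ (scl u).pts → q ∈ (scl u).pts := by
        intro p hp u hpu
        unfold GridSeg.pts at hp
        simp only [if_true, Set.mem_setOf_eq] at hp
        push_cast at hp
        exact ray_horiz (Or.inl rfl) hp.1 (by push_cast; linarith [hp.2.1]) (by push_cast; linarith [hp.2.2]) hpu hq1 hq2
      have leftP : q ∈ (⟨true, 3*iy, 3*ix-1, 3*ix, by omega⟩ : GridSeg).pts := by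
        unfold GridSeg.pts
        simp only [if_true, Set.mem_setOf_eq, hq1, hq2]
        push_cast
        exact ⟨rfl, by linarith, le_refl _⟩
      have leftE : q ∈ (⟨true, 3*iy, 3*ix-1, 3*ix, by omega⟩ : GridSeg).ends := by
        unfold GridSeg.ends
        simp only [if_true, Set.mem_insert_iff, Set.mem_singleton_iff]
        right
        rw [hq_def, Prod.ext_iff]
        constructor <;> push_cast <;> ring
      have leftR : ∀ p : ℝ × ℝ, p ∈ (⟨true, 3*iy, 3*ix-1, 3*ix, by omega⟩ : GridSeg).pts →
          ∀ u : GridSeg, p ∈ (scl u).pts → q ∈ (scl u).pts := by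
        intro p hp u hpu
        unfold GridSeg.pts at hp
        simp only [if_true, Set.mem_setOf_eq] at hp
        push_cast at hp
        exact ray_horiz (Or.inr rfl) hp.1 (by push_cast; linarith [hp.2.1])
          (by push_cast; linarith [hp.2.2]) hpu hq1 hq2
      -- interior of the x-segment avoids vertical rays at q
      have hdisj_up_x : Disjoint (⟨false, 3*ix, 3*iy, 3*iy+1, by omega⟩ : GridSeg).interior
          (scl (f1 xv)).interior := by
        rw [Set.disjoint_left]
        intro p hp1 hp2
        simp only [GridSeg.interior, scl] at hp1 hp2
        simp only [Bool.false_eq_true, if_false, hhx, if_true, Set.mem_setOf_eq] at hp1 hp2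
        push_cast at hp1 hp2
        linarith [hp1.2.1, hp2.1.le, hcaR.le, hcaR.ge]
      have hdisj_down_x : Disjoint (⟨false, 3*ix, 3*iy-1, 3*iy, by omega⟩ : GridSeg).interior
          (scl (f1 xv)).interior := by
        rw [Set.disjoint_left]
        intro p hp1 hp2
        simp only [GridSeg.interior, scl] at hp1 hp2
        simp only [Bool.false_eq_true, if_false, hhx, if_true, Set.mem_setOf_eq] at hp1 hp2
        push_cast at hp1 hp2
        linarith [hp1.2.2, hp2.1.le, hcaR.le, hcaR.ge]
      by_cases hhy : (f1 yv).horiz = true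
      · -- both horizontal : up ray works
        have hcb : (f1 yv).coord = iy := by
          have h := hqy
          unfold GridSeg.pts scl at h
          simp only [hhy, if_true, Set.mem_setOf_eq] at h
          have h1 : 3*(iy:ℝ) = ((3*(f1 yv).coord : ℤ):ℝ) := by rw [← hq2]; exact h.1
          have h' : 3*iy = 3*(f1 yv).coord := by exact_mod_cast h1
          omega
        have hcbR : ((f1 yv).coord : ℝ) = (iy:ℝ) := by exact_mod_cast hcb
        refine hfin ⟨false, 3*ix, 3*iy, 3*iy+1, by omega⟩ upP upE upR hdisj_up_x ?_
        rw [Set.disjoint_left]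
        intro p hp1 hp2
        simp only [GridSeg.interior, scl] at hp1 hp2
        simp only [Bool.false_eq_true, if_false, hhy, if_true, Set.mem_setOf_eq] at hp1 hp2
        push_cast at hp1 hp2
        linarith [hp1.2.1, hp2.1.le, hcbR.le, hcbR.ge]
      · -- y vertical
        have hhy' : (f1 yv).horiz = false := by
          simpa [Bool.not_eq_true] using hhy
        have hqy' : 3*(ix:ℝ) = ((3*(f1 yv).coord : ℤ):ℝ) ∧
            ((3*(f1 yv).lo : ℤ):ℝ) ≤ 3*(iy:ℝ) ∧ 3*(iy:ℝ) ≤ ((3*(f1 yv).hi : ℤ):ℝ) := by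
          have h := hqy
          unfold GridSeg.pts scl at h
          simp only [hhy', Bool.false_eq_true, if_false, Set.mem_setOf_eq] at h
          exact h
        have hcb : (f1 yv).coord = ix := by
          have h' : 3*ix = 3*(f1 yv).coord := by exact_mod_cast hqy'.1
          omega
        have hcbR : ((f1 yv).coord : ℝ) = (ix:ℝ) := by exact_mod_cast hcb
        have hblo : (f1 yv).lo ≤ iy := by
          have h' : 3*(f1 yv).lo ≤ 3*iy := by exact_mod_cast hqy'.2.1
          omega
        have hbhi : iy ≤ (f1 yv).hi := by
          have h' : 3*iy ≤ 3*(f1 yv).hi := by exact_mod_cast hqy'.2.2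
          omega
        by_cases htop : (f1 yv).hi = iy
        · -- q is the top of the y-segment : up ray works
          have htopR : ((f1 yv).hi : ℝ) = (iy:ℝ) := by exact_mod_cast htop
          refine hfin ⟨false, 3*ix, 3*iy, 3*iy+1, by omega⟩ upP upE upR hdisj_up_x ?_
          rw [Set.disjoint_left]
          intro p hp1 hp2
          simp only [GridSeg.interior, scl] at hp1 hp2
          simp only [Bool.false_eq_true, if_false, hhy', Set.mem_setOf_eq] at hp1 hp2
          push_cast at hp1 hp2
          linarith [hp1.2.1, hp2.2.2, htopR.le]
        by_cases hbot : (f1 yv).lo = iy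
        · -- q is the bottom of the y-segment : down ray works
          have hbotR : ((f1 yv).lo : ℝ) = (iy:ℝ) := by exact_mod_cast hbot
          refine hfin ⟨false, 3*ix, 3*iy-1, 3*iy, by omega⟩ downP downE downR hdisj_down_x ?_
          rw [Set.disjoint_left]
          intro p hp1 hp2
          simp only [GridSeg.interior, scl] at hp1 hp2
          simp only [Bool.false_eq_true, if_false, hhy', Set.mem_setOf_eq] at hp1 hp2
          push_cast at hp1 hp2
          linarith [hp1.2.2, hp2.2.1, hbotR.ge]
        · -- q is interior to the y-segment, so it is an endpoint of the x-segment
          have hblo' : (f1 yv).lo < iy := by omega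
          have hbhi' : iy < (f1 yv).hi := by omega
          have hqintB : q ∈ (scl (f1 yv)).interior := by
            simp only [GridSeg.interior, scl]
            simp only [hhy', Bool.false_eq_true, if_false, Set.mem_setOf_eq]
            refine ⟨?_, ?_, ?_⟩
            · rw [hq1]
              have hc : ((3*ix:ℤ):ℝ) = ((3*(f1 yv).coord:ℤ):ℝ) :=
                congrArg Int.cast (by omega : (3*ix:ℤ) = 3*(f1 yv).coord)
              push_cast at hc ⊢; linarith
            · rw [hq2]
              have hc : ((3*(f1 yv).lo:ℤ):ℝ) < ((3*iy:ℤ):ℝ) := Int.cast_lt.mpr (by omega)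
              push_cast at hc ⊢; linarith
            · rw [hq2]
              have hc : ((3*iy:ℤ):ℝ) < ((3*(f1 yv).hi:ℤ):ℝ) := Int.cast_lt.mpr (by omega)
              push_cast at hc ⊢; linarith
          have hqnint : q ∉ (scl (f1 xv)).interior := by
            intro hq'
            exact Set.disjoint_left.1 (hF.1 xv yv hxyv) hq' hqintB
          have hqends : q ∈ (scl (f1 xv)).ends := by
            by_contra hcon
            exact hqnint (mem_int_of_not_ends hqx hcon)
          have hends' : ix = (f1 xv).lo ∨ ix = (f1 xv).hi := by
            unfold GridSeg.ends scl at hqends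
            simp only [hhx, if_true, Set.mem_insert_iff, Set.mem_singleton_iff,
              Prod.ext_iff, hq1, hq2] at hqends
            rcases hqends with ⟨h', -⟩ | ⟨h', -⟩
            · left
              have : 3*ix = 3*(f1 xv).lo := by exact_mod_cast h'
              omega
            · right
              have : 3*ix = 3*(f1 xv).hi := by exact_mod_cast h'
              omega
          rcases hends' with hql | hqr
          · -- q is the left end of the x-segment : left ray works
            have hqlR : ((f1 xv).lo : ℝ) = (ix:ℝ) := by exact_mod_cast hql.symm
            refine hfin ⟨true, 3*iy, 3*ix-1, 3*ix, by omega⟩ leftP leftE leftR ?_ ?_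
            · rw [Set.disjoint_left]
              intro p hp1 hp2
              simp only [GridSeg.interior, scl] at hp1 hp2
              simp only [if_true, hhx, Set.mem_setOf_eq] at hp1 hp2
              push_cast at hp1 hp2
              linarith [hp1.2.2, hp2.2.1, hqlR.le]
            · rw [Set.disjoint_left]
              intro p hp1 hp2
              simp only [GridSeg.interior, scl] at hp1 hp2
              simp only [if_true, hhy', Bool.false_eq_true, if_false,
                Set.mem_setOf_eq] at hp1 hp2
              push_cast at hp1 hp2
              linarith [hp1.2.2, hp2.1.ge, hcbR.le]
          · -- q is the right end of the x-segment : right ray works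
            have hqrR : ((f1 xv).hi : ℝ) = (ix:ℝ) := by exact_mod_cast hqr.symm
            refine hfin ⟨true, 3*iy, 3*ix, 3*ix+1, by omega⟩ rightP rightE rightR ?_ ?_
            · rw [Set.disjoint_left]
              intro p hp1 hp2
              simp only [GridSeg.interior, scl] at hp1 hp2
              simp only [if_true, hhx, Set.mem_setOf_eq] at hp1 hp2
              push_cast at hp1 hp2
              linarith [hp1.2.1, hp2.2.2, hqrR.le]
            · rw [Set.disjoint_left]
              intro p hp1 hp2
              simp only [GridSeg.interior, scl] at hp1 hp2
              simp only [if_true, hhy', Bool.false_eq_true, if_false,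
                Set.mem_setOf_eq] at hp1 hp2
              push_cast at hp1 hp2
              linarith [hp1.2.1, hp2.1.le, hcbR.ge]
    -- apply aux in each orientation configuration
    have hav : a ≠ v := fun h => G.irrefl (h ▸ hva)
    have hbv : b ≠ v := fun h => G.irrefl (h ▸ hvb)
    have hadj_iff' : ∀ w : V, G.Adj v w ↔ (w = b ∨ w = a) := by
      intro w
      rw [hadj_iff]
      exact or_comm
    by_cases h1 : (f0 ⟨a, hav⟩).horiz = true
    · exact aux f0 hf0 a b hav hbv hab hGab hva hvb hadj_iff h1
    by_cases h2' : (f0 ⟨b, hbv⟩).horiz = true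
    · exact aux f0 hf0 b a hbv hav hab.symm hGab.symm hvb hva hadj_iff' h2'
    · refine aux (fun w => flp (f0 w)) (isB0Rep_flp hf0) a b hav hbv hab hGab hva hvb hadj_iff ?_
      simp only [flp]
      simp only [Bool.not_eq_true] at h1
      simp [h1]
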